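/- Let α be a type, W : α → Prop a decidable predicate, and s₁, s₂ lists over α with no duplicates. Suppose (i) every element of s₁ is an element of s₂, and (ii) for all a, b with W a, if a appears strictly before b in s₁ then a appears strictly before b in s₂. Then the list s₁ filtered to elements satisfying W is a sublist of s₂ filtered to elements satisfying W. -/

import Mathlib

/-- `a` appears strictly before `b` in the list `l`. -/
def StrictlyBefore {α : Type*} (l : List α) (a b : α) : Prop :=
  ∃ i j : ℕ, i < j ∧ l[i]? = some a ∧ l[j]? = some b

theorem pairwise_strictlyBefore {α : Type*} (l : List α) :
    l.Pairwise (StrictlyBefore l) := by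
  rw [List.pairwise_iff_getElem]
  intro i j hi hj hij
  exact ⟨i, j, hij, by simp [List.getElem?_eq_getElem, hi, hj]⟩

theorem indexOf_lt_of_strictlyBefore {α : Type*} [DecidableEq α] {l : List α} (h : l.Nodup)
    {a b : α} (hsb : StrictlyBefore l a b) : l.idxOf a < l.idxOf b := by
  obtain ⟨i, j, hij, ha, hb⟩ := hsb
  have hj : j < l.length := (List.getElem?_eq_some_iff.1 hb).1
  have hi : i < l.length := lt_trans hij hj
  rw [List.getElem?_eq_getElem hi] at ha
  rw [List.getElem?_eq_getElem hj] at hb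
  have ha' : a = l[i] := by simpa using ha.symm
  have hb' : b = l[j] := by simpa using hb.symm
  rw [ha', hb', List.Nodup.idxOf_getElem h, List.Nodup.idxOf_getElem h]
  exact hij

/-- If `s₁ ≾^{w*} s₂` (membership inclusion plus preservation of the order from
`W`-elements to later elements), then `s₁` restricted to `W` is a sublist of
`s₂` restricted to `W`. -/
theorem wstar_imp_filter_sublist {α : Type*} (W : α → Prop) [DecidablePred W]
    (s₁ s₂ : List α) (h₁ : s₁.Nodup) (h₂ : s₂.Nodup)
    (hmem : ∀ a ∈ s₁, a ∈ s₂)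
    (horder : ∀ a b, W a → StrictlyBefore s₁ a b → StrictlyBefore s₂ a b) :
    (s₁.filter fun a => decide (W a)).Sublist (s₂.filter fun a => decide (W a)) := by
  classical
  set r : α → α → Prop := fun a b => s₂.idxOf a < s₂.idxOf b with hr
  haveI : Std.Antisymm r := ⟨fun a b hab hba => absurd hba (by simp only [hr] at hab ⊢; omega)⟩
  apply List.sublist_of_subperm_of_pairwise (r := r)
  · apply List.subperm_of_subset (List.Nodup.filter _ h₁)
    intro a ha
    rw [List.mem_filter] at ha ⊢
    exact ⟨hmem a ha.1, ha.2⟩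
  · have hp : (s₁.filter fun a => decide (W a)).Pairwise (StrictlyBefore s₁) :=
      (pairwise_strictlyBefore s₁).sublist (List.filter_sublist (l := s₁))
    refine List.Pairwise.imp_of_mem ?_ hp
    intro a b ha _ hab
    have hWa : W a := by simpa using (List.mem_filter.1 ha).2
    exact indexOf_lt_of_strictlyBefore h₂ (horder a b hWa hab)
  · have hp : s₂.Pairwise r := by
      rw [List.pairwise_iff_getElem]
      intro i j hi hj hij
      simpa [hr, List.Nodup.idxOf_getElem h₂] using hij
    exact hp.sublist (List.filter_sublist (l := s₂))
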